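/- arXiv:1307.4251 — 13 statements merged into one kernel-verified Lean document; each statement's English description precedes it below -/
import Mathlib

section
/- Let d > 2 be an integer divisible by 4. Then the subgroup {1, d/2 + 1} of (ℤ/dℤ)ˣ is balanced, i.e., every coset C of this subgroup satisfies |C ∩ A| = |C ∩ B|. -/
/-- A subgroup `H` of `(ℤ/dℤ)ˣ` is *balanced* if every coset of `H` meets the set of
units with least positive residue in `(0, d/2)` and the set of units with least positive
residue in `(d/2, d)` in sets of the same cardinality. -/
def IsBalanced (d : ℕ) (H : Subgroup (ZMod d)ˣ) : Prop :=
  ∀ g : (ZMod d)ˣ,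
    {x : (ZMod d)ˣ | (∃ h ∈ H, x = g * h) ∧ 2 * ((x : ZMod d)).val < d}.ncard =
    {x : (ZMod d)ˣ | (∃ h ∈ H, x = g * h) ∧ d < 2 * ((x : ZMod d)).val}.ncard

theorem balanced_of_half_add_one (d : ℕ) (hd : 2 < d) (h4 : 4 ∣ d)
    (u : (ZMod d)ˣ) (hu : (u : ZMod d) = ((d / 2 : ℕ) : ZMod d) + 1) :
    IsBalanced d (Subgroup.zpowers u) := by
  obtain ⟨q, hq⟩ := h4
  haveI : NeZero d := ⟨by omega⟩
  set m := d / 2 with hmdef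
  have hm2 : d = 2 * m := by omega
  have hmq : m = 2 * q := by omega
  -- u has order dividing 2
  have hu2 : u * u = 1 := by
    ext
    push_cast [hu]
    have h1 : ((m : ZMod d)) * (m : ZMod d) = 0 := by
      rw [← Nat.cast_mul]
      have : m * m = d * q := by rw [hmq, hq]; ring
      rw [this, Nat.cast_mul, ZMod.natCast_self, zero_mul]
    have h2 : ((m : ZMod d)) + (m : ZMod d) = 0 := by
      rw [← Nat.cast_add]
      have : m + m = d := by omega
      rw [this, ZMod.natCast_self]
    ring_nf
    ring_nf at h1 h2
    linear_combination h1 + h2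
  intro g
  set v := ((g : ZMod d)).val with hvdef
  have hvlt : v < d := ZMod.val_lt _
  have hvodd : ¬ 2 ∣ v := by
    intro h2v
    have hc := ZMod.val_coe_unit_coprime g
    have : 2 ∣ Nat.gcd v d := Nat.dvd_gcd h2v ⟨m, hm2⟩
    rw [hc.gcd_eq_one] at this
    omega
  have hvcast : ((v : ℕ) : ZMod d) = (g : ZMod d) := by
    rw [hvdef, ZMod.natCast_val, ZMod.cast_id]
  -- value of g * u
  have hgu : ((g * u : (ZMod d)ˣ) : ZMod d) = (g : ZMod d) + (m : ZMod d) := by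
    rw [Units.val_mul, hu]
    have hgm : (g : ZMod d) * (m : ZMod d) = (m : ZMod d) := by
      obtain ⟨k, hk⟩ : ∃ k, v = 2 * k + 1 := ⟨v / 2, by omega⟩
      rw [← hvcast, ← Nat.cast_mul]
      have : v * m = k * d + m := by rw [hk, hm2]; ring
      rw [this, Nat.cast_add, Nat.cast_mul, ZMod.natCast_self, mul_zero, zero_add]
    rw [mul_add, hgm, mul_one, add_comm]
  have hguval : ((g * u : (ZMod d)ˣ) : ZMod d).val = (v + m) % d := by
    have hmm : m % d = m := Nat.mod_eq_of_lt (by omega)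
    rw [hgu, ZMod.val_add, ← hvdef, ZMod.val_natCast, hmm]
  -- coset description
  have hmem : ∀ x : (ZMod d)ˣ, (∃ h ∈ Subgroup.zpowers u, x = g * h) ↔ x = g ∨ x = g * u := by
    intro x
    constructor
    · rintro ⟨h, ⟨n, rfl⟩, rfl⟩
      have hzp : ∀ k : ℤ, u ^ (2 * k) = 1 := by
        intro k
        rw [zpow_mul]
        have : u ^ (2 : ℤ) = 1 := by rw [zpow_two, hu2]
        rw [this, one_zpow]
      rcases Int.even_or_odd n with ⟨k, hk⟩ | ⟨k, hk⟩
      · left; show g * u ^ n = g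
        rw [hk, show k + k = 2 * k by ring, hzp, mul_one]
      · right; show g * u ^ n = g * u
        rw [hk, zpow_add, hzp, one_mul, zpow_one]
    · rintro (hx | hx)
      · exact ⟨1, one_mem _, by rw [hx, mul_one]⟩
      · exact ⟨u, Subgroup.mem_zpowers u, hx⟩
  have hvne : v ≠ m := by
    intro h; apply hvodd; rw [h, hmq]; exact ⟨q, rfl⟩
  have hvpos : 0 < v := by
    rcases Nat.eq_zero_or_pos v with h | h
    · exact absurd (h ▸ dvd_zero 2) hvodd
    · exact h
  rcases lt_or_gt_of_ne hvne with hvm | hvm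
  · -- v < m : g in first half, g*u in second half
    have hw : ((g * u : (ZMod d)ˣ) : ZMod d).val = v + m := by
      rw [hguval, Nat.mod_eq_of_lt (by omega)]
    have hA : {x : (ZMod d)ˣ | (∃ h ∈ Subgroup.zpowers u, x = g * h) ∧
        2 * ((x : ZMod d)).val < d} = {g} := by
      ext x
      simp only [Set.mem_setOf_eq, Set.mem_singleton_iff, hmem]
      constructor
      · rintro ⟨hx | hx, h2⟩
        · exact hx
        · rw [hx, hw] at h2; omega
      · rintro hx; exact ⟨Or.inl hx, by rw [hx, ← hvdef]; omega⟩
    have hB : {x : (ZMod d)ˣ | (∃ h ∈ Subgroup.zpowers u, x = g * h) ∧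
        d < 2 * ((x : ZMod d)).val} = {g * u} := by
      ext x
      simp only [Set.mem_setOf_eq, Set.mem_singleton_iff, hmem]
      constructor
      · rintro ⟨hx | hx, h2⟩
        · rw [hx, ← hvdef] at h2; omega
        · exact hx
      · rintro hx; exact ⟨Or.inr hx, by rw [hx, hw]; omega⟩
    rw [hA, hB, Set.ncard_singleton, Set.ncard_singleton]
  · -- m < v : g in second half, g*u in first half
    have hw : ((g * u : (ZMod d)ˣ) : ZMod d).val = v - m := by
      rw [hguval]
      have : v + m = (v - m) + d := by omega
      rw [this, Nat.add_mod_right, Nat.mod_eq_of_lt (by omega)]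
    have hA : {x : (ZMod d)ˣ | (∃ h ∈ Subgroup.zpowers u, x = g * h) ∧
        2 * ((x : ZMod d)).val < d} = {g * u} := by
      ext x
      simp only [Set.mem_setOf_eq, Set.mem_singleton_iff, hmem]
      constructor
      · rintro ⟨hx | hx, h2⟩
        · rw [hx, ← hvdef] at h2; omega
        · exact hx
      · rintro hx; exact ⟨Or.inr hx, by rw [hx, hw]; omega⟩
    have hB : {x : (ZMod d)ˣ | (∃ h ∈ Subgroup.zpowers u, x = g * h) ∧
        d < 2 * ((x : ZMod d)).val} = {g} := by
      ext x
      simp only [Set.mem_setOf_eq, Set.mem_singleton_iff, hmem]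
      constructor
      · rintro ⟨hx | hx, h2⟩
        · exact hx
        · rw [hx, hw] at h2; omega
      · rintro hx; exact ⟨Or.inl hx, by rw [hx, ← hvdef]; omega⟩
    rw [hA, hB, Set.ncard_singleton, Set.ncard_singleton]
end

section
/- Let d > 2 and let H ⊆ H' be subgroups of (ℤ/dℤ)ˣ. If H is balanced, then H' is balanced. -/
open Finset in
theorem balanced_key {G : Type*} [CommGroup G] [Fintype G] [DecidableEq G]
    (H H' : Subgroup G) (hle : H ≤ H') (A : G → Prop) [DecidablePred A]
    [DecidablePred (· ∈ H)] [DecidablePred (· ∈ H')] (g : G) :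
    (univ.filter (· ∈ H)).card *
      (univ.filter (fun x => (∃ h ∈ H', x = g * h) ∧ A x)).card
      = ∑ h' ∈ univ.filter (· ∈ H'),
        (univ.filter (fun x => (∃ h ∈ H, x = g * h' * h) ∧ A x)).card := by
  classical
  have step1 : ∀ h' : G,
      (univ.filter (fun x => (∃ h ∈ H, x = g * h' * h) ∧ A x)).card
      = ∑ x : G, if (∃ h ∈ H, x = g * h' * h) ∧ A x then 1 else 0 := by
    intro h'; rw [Finset.card_filter]
  rw [Finset.sum_congr rfl (fun h' _ => step1 h'), Finset.sum_comm]
  have inner : ∀ x : G,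
      (∑ h' ∈ univ.filter (· ∈ H'), if (∃ h ∈ H, x = g * h' * h) ∧ A x then 1 else 0)
      = if (∃ h ∈ H', x = g * h) ∧ A x then (univ.filter (· ∈ H)).card else 0 := by
    intro x
    rw [Finset.sum_ite, Finset.sum_const_zero, add_zero, Finset.sum_const, smul_eq_mul,
      mul_one, Finset.filter_filter]
    by_cases hx : (∃ h ∈ H', x = g * h) ∧ A x
    · rw [if_pos hx]
      obtain ⟨⟨h0, h0H', hx0⟩, hA⟩ := hx
      apply Finset.card_bij' (fun h' _ => g⁻¹ * x * h'⁻¹) (fun h _ => g⁻¹ * x * h⁻¹)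
      · intro h' hh'
        simp only [Finset.mem_filter, Finset.mem_univ, true_and] at hh' ⊢
        obtain ⟨_, ⟨k, hk, hxk⟩, _⟩ := hh'
        have : g⁻¹ * x * h'⁻¹ = k := by
          rw [hxk, mul_right_comm g h' k]; group
        rwa [this]
      · intro k hk
        simp only [Finset.mem_filter, Finset.mem_univ, true_and] at hk ⊢
        refine ⟨?_, ⟨k, hk, by group⟩, hA⟩
        have hx' : g⁻¹ * x ∈ H' := by
          rw [hx0]; have : g⁻¹ * (g * h0) = h0 := by group
          rwa [this]
        exact H'.mul_mem hx' (H'.inv_mem (hle hk))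
      · intro h' _; simp [mul_inv_rev, mul_comm, mul_left_comm, mul_assoc]
      · intro k _; simp [mul_inv_rev, mul_comm, mul_left_comm, mul_assoc]
    · rw [if_neg hx]
      convert Finset.card_empty
      rw [Finset.filter_eq_empty_iff]
      intro h' _
      rintro ⟨hh'H', ⟨k, hk, hxk⟩, hA⟩
      exact hx ⟨⟨h' * k, H'.mul_mem hh'H' (hle hk), by rw [hxk]; group⟩, hA⟩
  rw [Finset.sum_congr rfl (fun x _ => inner x), Finset.sum_ite, Finset.sum_const_zero,
    add_zero, Finset.sum_const, smul_eq_mul, mul_comm]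

theorem balanced_mono (d : ℕ) (hd : 2 < d) (H H' : Subgroup (ZMod d)ˣ)
    (hle : H ≤ H') (h : IsBalanced d H) : IsBalanced d H' := by
  haveI : NeZero d := ⟨by omega⟩
  classical
  intro g
  have hAconv : ∀ (A : (ZMod d)ˣ → Prop) (_ : DecidablePred A) (K : Subgroup (ZMod d)ˣ)
      (g : (ZMod d)ˣ),
      {x : (ZMod d)ˣ | (∃ h ∈ K, x = g * h) ∧ A x}.ncard
      = (Finset.univ.filter (fun x => (∃ h ∈ K, x = g * h) ∧ A x)).card := by
    intro A _ K g
    rw [show {x : (ZMod d)ˣ | (∃ h ∈ K, x = g * h) ∧ A x}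
      = ↑(Finset.univ.filter (fun x => (∃ h ∈ K, x = g * h) ∧ A x)) by
        ext x; simp, Set.ncard_coe_finset]
  set A : (ZMod d)ˣ → Prop := fun x => 2 * ((x : ZMod d)).val < d with hA
  set B : (ZMod d)ˣ → Prop := fun x => d < 2 * ((x : ZMod d)).val with hB
  rw [hAconv A inferInstance H' g, hAconv B inferInstance H' g]
  have hcard : 0 < (Finset.univ.filter (· ∈ H)).card := by
    rw [Finset.card_pos]
    exact ⟨1, by simp [H.one_mem]⟩
  have key := balanced_key H H' hle A g
  have key' := balanced_key H H' hle B g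
  have key2 : (∑ h' ∈ Finset.univ.filter (· ∈ H'),
        (Finset.univ.filter (fun x => (∃ h ∈ H, x = g * h' * h) ∧ A x)).card)
      = ∑ h' ∈ Finset.univ.filter (· ∈ H'),
        (Finset.univ.filter (fun x => (∃ h ∈ H, x = g * h' * h) ∧ B x)).card := by
    refine Finset.sum_congr rfl fun h' _ => ?_
    have := h (g * h')
    rwa [hAconv A inferInstance H (g * h'), hAconv B inferInstance H (g * h')] at this
  exact Nat.eq_of_mul_eq_mul_left hcard (key.trans (key2.trans key'.symm))
end

section
/- Let d > 2 and let H be a balanced subgroup of (ℤ/dℤ)ˣ. Then the order of H is even. -/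
theorem balanced_even_order (d : ℕ) (hd : 2 < d) (H : Subgroup (ZMod d)ˣ)
    (h : IsBalanced d H) : Even (Nat.card H) := by
  haveI : NeZero d := ⟨by omega⟩
  have key := h 1
  set S := {x : (ZMod d)ˣ | (∃ h ∈ H, x = 1 * h) ∧ 2 * ((x : ZMod d)).val < d} with hS
  set T := {x : (ZMod d)ˣ | (∃ h ∈ H, x = 1 * h) ∧ d < 2 * ((x : ZMod d)).val} with hT
  have hA : ∀ x : (ZMod d)ˣ, ¬ (2 * ((x : ZMod d)).val = d) := by
    intro x hx
    have hc : Nat.Coprime ((x : ZMod d)).val d := ZMod.val_coe_unit_coprime x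
    have hdvd : ((x : ZMod d)).val ∣ d := ⟨2, by omega⟩
    have h1 : ((x : ZMod d)).val = 1 := by
      have := Nat.gcd_eq_left hdvd
      simpa [Nat.Coprime, this] using hc
    omega
  have hu : S ∪ T = (H : Set (ZMod d)ˣ) := by
    ext x
    simp only [hS, hT, Set.mem_union, Set.mem_setOf_eq, one_mul, SetLike.mem_coe]
    constructor
    · rintro (⟨⟨g, hg, rfl⟩, _⟩ | ⟨⟨g, hg, rfl⟩, _⟩) <;> exact hg
    · intro hx
      rcases lt_trichotomy (2 * ((x : ZMod d)).val) d with h' | h' | h'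
      · exact Or.inl ⟨⟨x, hx, rfl⟩, h'⟩
      · exact absurd h' (hA x)
      · exact Or.inr ⟨⟨x, hx, rfl⟩, h'⟩
  have hdisj : Disjoint S T := by
    rw [Set.disjoint_left]
    rintro x ⟨_, h1⟩ ⟨_, h2⟩
    omega
  have hcard : (H : Set (ZMod d)ˣ).ncard = S.ncard + T.ncard := by
    rw [← hu, Set.ncard_union_eq hdisj (Set.toFinite _) (Set.toFinite _)]
  have hnc : Nat.card H = (H : Set (ZMod d)ˣ).ncard := (Nat.card_coe_set_eq _).symm
  rw [hnc, hcard, ← key]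
  exact ⟨S.ncard, by ring⟩
end

section
/- Let d = ℓ^a be an odd prime power with d > 2, and let p be an integer coprime to d. Then the cyclic subgroup ⟨p⟩ of (ℤ/dℤ)ˣ is balanced if and only if -1 ∈ ⟨p⟩. -/
lemma sq_eq_one_aux (ℓ a : ℕ) (hℓ : ℓ.Prime) (hodd : Odd ℓ) [NeZero (ℓ ^ a)]
    (u : ZMod (ℓ ^ a)) (hu : u ^ 2 = 1) : u = 1 ∨ u = -1 := by
  obtain ⟨n, rfl⟩ := ZMod.intCast_surjective u
  have hprime : Prime (ℓ : ℤ) := Nat.prime_iff_prime_int.mp hℓ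
  have hdvd : ((ℓ : ℤ) ^ a) ∣ (n - 1) * (n + 1) := by
    have : ((((n - 1) * (n + 1)) : ℤ) : ZMod (ℓ ^ a)) = 0 := by
      push_cast
      ring_nf
      ring_nf at hu
      linear_combination hu
    rw [ZMod.intCast_zmod_eq_zero_iff_dvd] at this
    exact_mod_cast this
  by_cases hc : (ℓ : ℤ) ∣ n - 1
  · have hnd : ¬ (ℓ : ℤ) ∣ n + 1 := by
      intro hd2
      have : (ℓ : ℤ) ∣ 2 := by
        have := dvd_sub hd2 hc
        simpa using this
      have h2 : (ℓ : ℤ) ≤ 2 := Int.le_of_dvd (by norm_num) this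
      obtain ⟨k, hk⟩ := hodd
      have := hℓ.two_le
      omega
    have hcop : IsCoprime ((ℓ : ℤ) ^ a) (n + 1) :=
      ((hprime.coprime_iff_not_dvd).mpr hnd).pow_left
    have hdd : ((ℓ : ℤ) ^ a) ∣ n - 1 := hcop.dvd_of_dvd_mul_right hdvd
    left
    have : ((n - 1 : ℤ) : ZMod (ℓ ^ a)) = 0 := by
      rw [ZMod.intCast_zmod_eq_zero_iff_dvd]; exact_mod_cast hdd
    push_cast at this
    exact sub_eq_zero.mp this
  · have hcop : IsCoprime ((ℓ : ℤ) ^ a) (n - 1) :=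
      ((hprime.coprime_iff_not_dvd).mpr hc).pow_left
    have hdd : ((ℓ : ℤ) ^ a) ∣ n + 1 := hcop.dvd_of_dvd_mul_left hdvd
    right
    have : ((n + 1 : ℤ) : ZMod (ℓ ^ a)) = 0 := by
      rw [ZMod.intCast_zmod_eq_zero_iff_dvd]; exact_mod_cast hdd
    push_cast at this
    exact eq_neg_of_add_eq_zero_left this

-- generic version for any subgroup of `(ZMod d)ˣ`, `d` odd, with unique square roots of 1
lemma balanced_iff_aux (d : ℕ) (hd : 2 < d) (hdodd : Odd d)
    (hsq : ∀ u : ZMod d, u ^ 2 = 1 → u = 1 ∨ u = -1) (H : Subgroup (ZMod d)ˣ) :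
    IsBalanced d H ↔ (-1 : (ZMod d)ˣ) ∈ H := by
  haveI : NeZero d := ⟨by omega⟩
  haveI : Fact (1 < d) := ⟨by omega⟩
  have hval : ∀ x : (ZMod d)ˣ, 0 < ((x : ZMod d)).val ∧ ((x : ZMod d)).val < d ∧
      2 * ((x : ZMod d)).val ≠ d := by
    intro x
    have h0 : (x : ZMod d) ≠ 0 := x.ne_zero
    have h1 : ((x : ZMod d)).val ≠ 0 := fun h => h0 (by rwa [← ZMod.val_eq_zero])
    have h2 : ((x : ZMod d)).val < d := ZMod.val_lt _
    obtain ⟨k, hk⟩ := hdodd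
    exact ⟨Nat.pos_of_ne_zero h1, h2, by omega⟩
  have hnegval : ∀ x : (ZMod d)ˣ, (((-x : (ZMod d)ˣ) : ZMod d)).val = d - ((x : ZMod d)).val := by
    intro x
    rw [Units.val_neg, ZMod.neg_val, if_neg x.ne_zero]
  constructor
  · intro hbal
    have h1 := hbal 1
    simp only [one_mul] at h1
    have hmemiff : ∀ x : (ZMod d)ˣ, (∃ h ∈ H, x = h) ↔ x ∈ H := by
      intro x; constructor
      · rintro ⟨h, hh, rfl⟩; exact hh
      · intro hx; exact ⟨x, hx, rfl⟩
    set A : Set (ZMod d)ˣ := {x | x ∈ H ∧ 2 * ((x : ZMod d)).val < d} with hA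
    set B : Set (ZMod d)ˣ := {x | x ∈ H ∧ d < 2 * ((x : ZMod d)).val} with hB
    have h1' : A.ncard = B.ncard := by
      convert h1 using 3 <;> ext x <;> simp [hA, hB, hmemiff x]
    have hunion : (H : Set (ZMod d)ˣ) = A ∪ B := by
      ext x
      obtain ⟨hx0, hx1, hx2⟩ := hval x
      simp only [hA, hB, Set.mem_union, Set.mem_setOf_eq, SetLike.mem_coe]
      constructor
      · intro hx; rcases lt_or_gt_of_ne hx2 with h | h
        · exact Or.inl ⟨hx, h⟩
        · exact Or.inr ⟨hx, h⟩
      · rintro (⟨hx, _⟩ | ⟨hx, _⟩) <;> exact hx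
    have hdisj : Disjoint A B := by
      rw [Set.disjoint_left]
      rintro x ⟨_, hx1⟩ ⟨_, hx2⟩
      omega
    have hcard : Nat.card H = 2 * A.ncard := by
      have h2 : (H : Set (ZMod d)ˣ).ncard = A.ncard + B.ncard := by
        rw [hunion]
        exact Set.ncard_union_eq hdisj (Set.toFinite A) (Set.toFinite B)
      rw [← Nat.card_coe_set_eq] at h2
      rw [← SetLike.coe_sort_coe]
      omega
    have heven : 2 ∣ Nat.card H := ⟨A.ncard, hcard⟩
    haveI : Fintype H := Fintype.ofFinite H
    haveI : Fact (Nat.Prime 2) := ⟨Nat.prime_two⟩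
    obtain ⟨x, hx⟩ := exists_prime_orderOf_dvd_card (G := H) 2
      (by rwa [← Nat.card_eq_fintype_card])
    have hxG : orderOf (x : (ZMod d)ˣ) = 2 := by
      rw [← hx]
      exact orderOf_injective H.subtype (Subgroup.subtype_injective H) x
    have hx2 : (x : (ZMod d)ˣ) ^ 2 = 1 := by rw [← hxG]; exact pow_orderOf_eq_one _
    have hxne : (x : (ZMod d)ˣ) ≠ 1 := by
      intro h; rw [h, orderOf_one] at hxG; omega
    have hzm : ((x : (ZMod d)ˣ) : ZMod d) ^ 2 = 1 := by
      rw [← Units.val_pow_eq_pow_val, hx2, Units.val_one]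
    rcases hsq _ hzm with h | h
    · exact absurd (Units.ext (by rw [h, Units.val_one])) hxne
    · have hxeq : (x : (ZMod d)ˣ) = -1 := Units.ext (by rw [h, Units.val_neg, Units.val_one])
      rw [← hxeq]
      exact x.2
  · intro hmem g
    have key : {x : (ZMod d)ˣ | (∃ h ∈ H, x = g * h) ∧ d < 2 * ((x : ZMod d)).val} =
        (fun x : (ZMod d)ˣ => -x) '' {x | (∃ h ∈ H, x = g * h) ∧ 2 * ((x : ZMod d)).val < d} := by
      ext x
      obtain ⟨hx0, hx1, hx2⟩ := hval x
      simp only [Set.mem_image, Set.mem_setOf_eq]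
      constructor
      · rintro ⟨⟨h, hh, rfl⟩, hlt⟩
        refine ⟨-(g * h), ⟨⟨-h, by simpa using H.mul_mem hh hmem, by rw [mul_neg]⟩, ?_⟩,
          by rw [neg_neg]⟩
        obtain ⟨h0', h1', h2'⟩ := hval (g * h)
        rw [hnegval]
        omega
      · rintro ⟨y, ⟨⟨h, hh, rfl⟩, hlt⟩, rfl⟩
        obtain ⟨h0', h1', h2'⟩ := hval (g * h)
        refine ⟨⟨-h, by simpa using H.mul_mem hh hmem, by rw [mul_neg]⟩, ?_⟩
        rw [hnegval]
        omega
    rw [key, Set.ncard_image_of_injective _ neg_injective]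

theorem balanced_iff_neg_one_mem_of_odd_prime_pow (ℓ a p : ℕ) (hℓ : ℓ.Prime)
    (hodd : Odd ℓ) (ha : 1 ≤ a) (hd : 2 < ℓ ^ a) (hp : Nat.Coprime p (ℓ ^ a)) :
    IsBalanced (ℓ ^ a) (Subgroup.zpowers (ZMod.unitOfCoprime p hp)) ↔
      (-1 : (ZMod (ℓ ^ a))ˣ) ∈ Subgroup.zpowers (ZMod.unitOfCoprime p hp) := by
  haveI : NeZero (ℓ ^ a) := ⟨by omega⟩
  exact balanced_iff_aux (ℓ ^ a) hd hodd.pow (sq_eq_one_aux ℓ a hℓ hodd) _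
end

section
/- Let d = 2ℓ^a be twice an odd prime power (with d > 2), and let p be an odd integer coprime to ℓ. Then the cyclic subgroup ⟨p⟩ of (ℤ/dℤ)ˣ is balanced if and only if -1 ∈ ⟨p⟩. -/
/-- Basic facts about the value of a unit mod `2ℓ^a`. -/
lemma aux_val (ℓ a : ℕ) (hℓ : ℓ.Prime) (ha : 1 ≤ a) (hd : 2 < 2 * ℓ ^ a)
    (x : (ZMod (2 * ℓ ^ a))ˣ) :
    ((x : ZMod (2 * ℓ ^ a))).val ≠ 0 ∧ ((x : ZMod (2 * ℓ ^ a))).val < 2 * ℓ ^ a ∧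
      2 * ((x : ZMod (2 * ℓ ^ a))).val ≠ 2 * ℓ ^ a := by
  haveI : NeZero (2 * ℓ ^ a) := ⟨by omega⟩
  have hcop := ZMod.val_coe_unit_coprime x
  refine ⟨?_, ZMod.val_lt _, ?_⟩
  · intro h0
    rw [h0] at hcop
    have := Nat.coprime_zero_left (2 * ℓ ^ a) |>.mp hcop
    omega
  · intro heq
    have hval : ((x : ZMod (2 * ℓ ^ a))).val = ℓ ^ a := by omega
    have h1 : ℓ ∣ ((x : ZMod (2 * ℓ ^ a))).val := by
      rw [hval]; exact dvd_pow_self ℓ (by omega)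
    have h2 : ℓ ∣ 2 * ℓ ^ a := Dvd.dvd.mul_left (dvd_pow_self ℓ (by omega)) 2
    have hg := Nat.dvd_gcd h1 h2
    rw [Nat.Coprime] at hcop
    rw [hcop] at hg
    exact hℓ.one_lt.ne' (Nat.dvd_one.mp hg)

/-- Square roots of unity mod `2ℓ^a` are `±1`. -/
lemma aux_sq (ℓ a : ℕ) (hℓ : ℓ.Prime) (hodd : Odd ℓ) (ha : 1 ≤ a) (hd : 2 < 2 * ℓ ^ a)
    (x : (ZMod (2 * ℓ ^ a))ˣ) (hx : x ^ 2 = 1) : x = 1 ∨ x = -1 := by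
  haveI : NeZero (2 * ℓ ^ a) := ⟨by omega⟩
  obtain ⟨hn0, hnlt, -⟩ := aux_val ℓ a hℓ ha hd x
  have hℓ3 : 3 ≤ ℓ := by
    rcases hodd with ⟨k, hk⟩
    have := hℓ.two_le
    omega
  have hcop := ZMod.val_coe_unit_coprime x
  have hnodd : ¬ 2 ∣ ((x : ZMod (2 * ℓ ^ a))).val := by
    intro h2
    have hg : 2 ∣ Nat.gcd ((x : ZMod (2 * ℓ ^ a))).val (2 * ℓ ^ a) :=
      Nat.dvd_gcd h2 ⟨ℓ ^ a, rfl⟩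
    rw [Nat.Coprime] at hcop
    rw [hcop] at hg
    omega
  obtain ⟨m, hm⟩ : ∃ m, ((x : ZMod (2 * ℓ ^ a))).val = m + 1 := ⟨((x : ZMod (2 * ℓ ^ a))).val - 1, by omega⟩
  have hcast : ((x : ZMod (2 * ℓ ^ a))) = ((m + 1 : ℕ) : ZMod (2 * ℓ ^ a)) := by
    rw [← hm]
    simp [ZMod.natCast_val, ZMod.cast_id]
  have hx2 : (((m + 1) * (m + 1) : ℕ) : ZMod (2 * ℓ ^ a)) = ((1 : ℕ) : ZMod (2 * ℓ ^ a)) := by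
    have h1 : ((x : ZMod (2 * ℓ ^ a))) * ((x : ZMod (2 * ℓ ^ a))) = 1 := by
      have := congrArg (Units.val) hx
      simpa [pow_two] using this
    rw [Nat.cast_mul, ← hcast, Nat.cast_one]
    exact h1
  have hmod : (m + 1) * (m + 1) ≡ 1 [MOD 2 * ℓ ^ a] := (ZMod.natCast_eq_natCast_iff _ _ _).mp hx2
  have hdvd : 2 * ℓ ^ a ∣ (m + 1) * (m + 1) - 1 :=
    (Nat.modEq_iff_dvd' (Nat.one_le_iff_ne_zero.mpr (by positivity))).mp hmod.symm
  have hfac : (m + 1) * (m + 1) - 1 = m * (m + 2) := by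
    have : (m + 1) * (m + 1) = m * (m + 2) + 1 := by ring
    omega
  rw [hfac] at hdvd
  have hm2 : 2 ∣ m := by omega
  have hla : ℓ ^ a ∣ m * (m + 2) := dvd_trans (dvd_mul_left (ℓ ^ a) 2) hdvd
  have hlm : ℓ ^ a ∣ m ∨ ℓ ^ a ∣ m + 2 := by
    by_cases hc : ℓ ∣ m + 2
    · have hnc : ¬ ℓ ∣ m := by
        intro h
        have h2 : ℓ ∣ 2 := by
          have h3 := Nat.dvd_sub hc h
          rwa [show m + 2 - m = 2 from by omega] at h3
        have := Nat.le_of_dvd (by norm_num) h2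
        omega
      have hco : Nat.Coprime (ℓ ^ a) m := Nat.Coprime.pow_left _ (hℓ.coprime_iff_not_dvd.mpr hnc)
      exact Or.inr (hco.dvd_of_dvd_mul_left hla)
    · have hco : Nat.Coprime (ℓ ^ a) (m + 2) :=
        Nat.Coprime.pow_left _ (hℓ.coprime_iff_not_dvd.mpr hc)
      exact Or.inl (hco.dvd_of_dvd_mul_right hla)
  have hcop2 : Nat.Coprime 2 (ℓ ^ a) :=
    Nat.Coprime.pow_right _ (by
      rw [Nat.coprime_comm]
      refine hℓ.coprime_iff_not_dvd.mpr fun h => ?_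
      have := Nat.le_of_dvd (by norm_num) h
      omega)
  rcases hlm with hml | hml
  · have hdm : 2 * ℓ ^ a ∣ m := Nat.Coprime.mul_dvd_of_dvd_of_dvd hcop2 hm2 hml
    left
    ext
    rw [hcast, Nat.cast_add, (ZMod.natCast_eq_zero_iff m _).mpr hdm]
    simp
  · have hdm : 2 * ℓ ^ a ∣ m + 2 := Nat.Coprime.mul_dvd_of_dvd_of_dvd hcop2 (by omega) hml
    right
    ext
    rw [hcast]
    have h0 : ((m + 2 : ℕ) : ZMod (2 * ℓ ^ a)) = 0 :=
      (ZMod.natCast_eq_zero_iff _ _).mpr hdm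
    have h2 : ((m + 1 : ℕ) : ZMod (2 * ℓ ^ a)) = ((m + 2 : ℕ) : ZMod (2 * ℓ ^ a)) - 1 := by
      push_cast; ring
    rw [h2, h0]
    simp

theorem balanced_iff_neg_one_mem_of_twice_odd_prime_pow (ℓ a p : ℕ) (hℓ : ℓ.Prime)
    (hodd : Odd ℓ) (ha : 1 ≤ a) (hd : 2 < 2 * ℓ ^ a) (hpodd : Odd p)
    (hpl : Nat.Coprime p ℓ) (hp : Nat.Coprime p (2 * ℓ ^ a)) :
    IsBalanced (2 * ℓ ^ a) (Subgroup.zpowers (ZMod.unitOfCoprime p hp)) ↔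
      (-1 : (ZMod (2 * ℓ ^ a))ˣ) ∈ Subgroup.zpowers (ZMod.unitOfCoprime p hp) := by
  haveI : NeZero (2 * ℓ ^ a) := ⟨by omega⟩
  set H := Subgroup.zpowers (ZMod.unitOfCoprime p hp) with hH
  constructor
  · -- balanced → -1 ∈ H
    intro hbal
    set S₁ := {x : (ZMod (2 * ℓ ^ a))ˣ |
      (∃ h ∈ H, x = 1 * h) ∧ 2 * ((x : ZMod (2 * ℓ ^ a))).val < 2 * ℓ ^ a} with hS₁
    set S₂ := {x : (ZMod (2 * ℓ ^ a))ˣ |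
      (∃ h ∈ H, x = 1 * h) ∧ 2 * ℓ ^ a < 2 * ((x : ZMod (2 * ℓ ^ a))).val} with hS₂
    have hunion : (H : Set (ZMod (2 * ℓ ^ a))ˣ) = S₁ ∪ S₂ := by
      ext x
      obtain ⟨-, -, hne⟩ := aux_val ℓ a hℓ ha hd x
      simp only [hS₁, hS₂, Set.mem_union, Set.mem_setOf_eq, SetLike.mem_coe, one_mul]
      constructor
      · intro hx
        rcases Nat.lt_or_ge (2 * ((x : ZMod (2 * ℓ ^ a))).val) (2 * ℓ ^ a) with h | h
        · exact Or.inl ⟨⟨x, hx, rfl⟩, h⟩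
        · exact Or.inr ⟨⟨x, hx, rfl⟩, by omega⟩
      · rintro (⟨⟨h, hh, rfl⟩, -⟩ | ⟨⟨h, hh, rfl⟩, -⟩) <;> exact hh
    have hdisj : Disjoint S₁ S₂ := by
      rw [Set.disjoint_left]
      rintro x ⟨-, h1⟩ ⟨-, h2⟩
      omega
    have hcard : Nat.card H = S₁.ncard + S₂.ncard := by
      rw [← Set.ncard_union_eq hdisj (Set.toFinite _) (Set.toFinite _), ← hunion]
      exact Nat.card_coe_set_eq _
    have hb := hbal 1
    have hb' : S₁.ncard = S₂.ncard := hb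
    have heven : 2 ∣ Nat.card H := by
      rw [hcard, hb']
      exact ⟨S₂.ncard, by omega⟩
    haveI : Fintype H := Fintype.ofFinite _
    rw [Nat.card_eq_fintype_card] at heven
    haveI : Fact (Nat.Prime 2) := ⟨Nat.prime_two⟩
    obtain ⟨y, hy⟩ := exists_prime_orderOf_dvd_card 2 heven
    have hyG : orderOf ((y : (ZMod (2 * ℓ ^ a))ˣ)) = 2 := by
      have h' := orderOf_injective H.subtype Subtype.coe_injective y
      rw [hy] at h'
      exact h'
    have hsq : ((y : (ZMod (2 * ℓ ^ a))ˣ)) ^ 2 = 1 := by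
      have h' := pow_orderOf_eq_one ((y : (ZMod (2 * ℓ ^ a))ˣ))
      rwa [hyG] at h'
    have hne1 : ((y : (ZMod (2 * ℓ ^ a))ˣ)) ≠ 1 := by
      intro h
      rw [h] at hyG
      simp at hyG
    rcases aux_sq ℓ a hℓ hodd ha hd _ hsq with h | h
    · exact absurd h hne1
    · rw [← h]; exact y.2
  · -- -1 ∈ H → balanced
    intro hneg g
    have hset : {x : (ZMod (2 * ℓ ^ a))ˣ |
          (∃ h ∈ H, x = g * h) ∧ 2 * ℓ ^ a < 2 * ((x : ZMod (2 * ℓ ^ a))).val} =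
        Neg.neg '' {x : (ZMod (2 * ℓ ^ a))ˣ |
          (∃ h ∈ H, x = g * h) ∧ 2 * ((x : ZMod (2 * ℓ ^ a))).val < 2 * ℓ ^ a} := by
      ext x
      simp only [Set.mem_image, Set.mem_setOf_eq]
      constructor
      · rintro ⟨⟨h, hh, rfl⟩, hval⟩
        obtain ⟨h0, hlt, hne⟩ := aux_val ℓ a hℓ ha hd (g * h)
        refine ⟨-(g * h), ⟨⟨(-1) * h, H.mul_mem hneg hh, by rw [neg_one_mul, mul_neg]⟩, ?_⟩,
          by simp⟩
        have hval' : ((((-(g * h)) : (ZMod (2 * ℓ ^ a))ˣ) : ZMod (2 * ℓ ^ a))).val =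
            2 * ℓ ^ a - (((g * h : (ZMod (2 * ℓ ^ a))ˣ) : ZMod (2 * ℓ ^ a))).val := by
          rw [Units.val_neg, ZMod.neg_val, if_neg]
          intro h0'
          exact h0 (by rw [h0']; simp [ZMod.val_zero])
        rw [hval']
        omega
      · rintro ⟨z, ⟨⟨h, hh, rfl⟩, hval⟩, rfl⟩
        obtain ⟨h0, hlt, hne⟩ := aux_val ℓ a hℓ ha hd (g * h)
        refine ⟨⟨(-1) * h, H.mul_mem hneg hh, by rw [neg_one_mul, mul_neg]⟩, ?_⟩
        have hval' : ((((-(g * h)) : (ZMod (2 * ℓ ^ a))ˣ) : ZMod (2 * ℓ ^ a))).val =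
            2 * ℓ ^ a - (((g * h : (ZMod (2 * ℓ ^ a))ˣ) : ZMod (2 * ℓ ^ a))).val := by
          rw [Units.val_neg, ZMod.neg_val, if_neg]
          intro h0'
          exact h0 (by rw [h0']; simp [ZMod.val_zero])
        rw [hval']
        omega
    rw [hset, Set.ncard_image_of_injective _ neg_injective]
end

section
/- Let p be an odd prime and d a positive integer with p ∤ d and d > 2. Then for all sufficiently large j, p is balanced modulo 2^j·d, i.e., the cyclic subgroup ⟨p⟩ of (ℤ/2^jdℤ)ˣ is balanced. -/
lemma sq_step (c u : ℕ) (hu : Odd u) (hc : 2 ≤ c) :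
    ∃ v, Odd v ∧ (1 + 2 ^ c * u) ^ 2 = 1 + 2 ^ (c + 1) * v := by
  obtain ⟨c, rfl⟩ := Nat.exists_eq_add_of_le hc
  refine ⟨u + 2 ^ (1 + c) * u ^ 2, ?_, by ring⟩
  exact hu.add_even (Even.mul_right ⟨2 ^ c, by ring⟩ _)

lemma pow_two_pow (c u : ℕ) (hu : Odd u) (hc : 2 ≤ c) (k : ℕ) :
    ∃ v, Odd v ∧ (1 + 2 ^ c * u) ^ 2 ^ k = 1 + 2 ^ (c + k) * v := by
  induction k with
  | zero => exact ⟨u, hu, by simp⟩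
  | succ k ih =>
    obtain ⟨v, hv, he⟩ := ih
    obtain ⟨v', hv', he'⟩ := sq_step (c + k) v hv (by omega)
    exact ⟨v', hv', by rw [pow_succ, pow_mul, he, he', Nat.add_assoc]⟩



lemma isBalanced_of_swap (n : ℕ) (H : Subgroup (ZMod n)ˣ) (w : (ZMod n)ˣ) (hw : w ∈ H)
    (hkey : ∀ x : (ZMod n)ˣ,
      2 * ((x : ZMod n)).val < n ↔ n < 2 * (((x * w : (ZMod n)ˣ) : ZMod n)).val) :
    IsBalanced n H := by
  intro g
  have himg : {x : (ZMod n)ˣ | (∃ h ∈ H, x = g * h) ∧ n < 2 * ((x : ZMod n)).val}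
      = (· * w) '' {x : (ZMod n)ˣ | (∃ h ∈ H, x = g * h) ∧ 2 * ((x : ZMod n)).val < n} := by
    ext y
    simp only [Set.mem_image, Set.mem_setOf_eq]
    constructor
    · rintro ⟨⟨h, hh, rfl⟩, hy⟩
      refine ⟨g * h * w⁻¹, ⟨⟨h * w⁻¹, H.mul_mem hh (H.inv_mem hw), mul_assoc _ _ _⟩, ?_⟩,
        by group⟩
      have := (hkey (g * h * w⁻¹)).mpr
      rw [inv_mul_cancel_right] at this
      exact this hy
    · rintro ⟨x, ⟨⟨h, hh, rfl⟩, hx⟩, rfl⟩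
      exact ⟨⟨h * w, H.mul_mem hh hw, mul_assoc _ _ _⟩, (hkey _).mp hx⟩
  rw [himg, Set.ncard_image_of_injective _ (mul_left_injective w)]

lemma swap_key (n h : ℕ) (hn : n = 2 * h) (hhe : Even h) (hh : 0 < h) [NeZero n]
    (x w : (ZMod n)ˣ) (hw : (w : ZMod n) = ((1 + h : ℕ) : ZMod n)) :
    2 * ((x : ZMod n)).val < n ↔ n < 2 * (((x * w : (ZMod n)ˣ) : ZMod n)).val := by
  set xv := ((x : ZMod n)).val with hxv
  have hcop : Nat.Coprime xv n := ZMod.val_coe_unit_coprime x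
  have hxodd : Odd xv := by
    rcases Nat.even_or_odd xv with he | ho
    · exfalso
      have h2 : 2 ∣ Nat.gcd xv n := Nat.dvd_gcd he.two_dvd ⟨h, hn⟩
      rw [hcop] at h2; omega
    · exact ho
  have hxlt : xv < n := ZMod.val_lt _
  have hxpos : 0 < xv := hxodd.pos
  have hmul : ((x * w : (ZMod n)ˣ) : ZMod n) = ((xv + h : ℕ) : ZMod n) := by
    have h1 : ((x * w : (ZMod n)ˣ) : ZMod n) = ((xv * (1 + h) : ℕ) : ZMod n) := by
      rw [Units.val_mul, hw, Nat.cast_mul, ZMod.natCast_val, ZMod.cast_id]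
    rw [h1]
    have : xv * (1 + h) ≡ xv + h [MOD n] := by
      have hd : n ∣ xv * (1 + h) - (xv + h) := by
        obtain ⟨m, hm⟩ := hxodd
        refine ⟨m, ?_⟩
        rw [hm, hn]
        have : (2 * m + 1) * (1 + h) = (2 * m + 1 + h) + 2 * h * m := by ring
        omega
      exact (Nat.modEq_iff_dvd' (by nlinarith)).mpr hd |>.symm
    exact (ZMod.natCast_eq_natCast_iff _ _ _).mpr this
  have hval : (((x * w : (ZMod n)ˣ) : ZMod n)).val = (xv + h) % n := by
    rw [hmul, ZMod.val_natCast]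
  rw [hval]
  have hne : xv ≠ h := by
    rintro rfl; exact (Nat.not_even_iff_odd.mpr hxodd) hhe
  rcases Nat.lt_or_ge xv h with hlt | hge
  · rw [Nat.mod_eq_of_lt (by omega)]; omega
  · have hgt : h < xv := lt_of_le_of_ne hge (Ne.symm hne)
    rw [Nat.mod_eq_sub_mod (by omega), Nat.mod_eq_of_lt (by omega)]
    omega


theorem balanced_mod_two_pow_mul (p d : ℕ) (hp : p.Prime) (hodd : Odd p)
    (hpd : ¬ p ∣ d) (hd : 2 < d) :
    ∃ J : ℕ, ∀ j ≥ J, ∀ u : (ZMod (2 ^ j * d))ˣ,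
      (u : ZMod (2 ^ j * d)) = (p : ZMod (2 ^ j * d)) →
      IsBalanced (2 ^ j * d) (Subgroup.zpowers u) := by
  have hcop : Nat.Coprime p d := (hp.coprime_iff_not_dvd).mpr hpd
  have hp3 : 3 ≤ p := by have := hp.two_le; have := Nat.odd_iff.mp hodd; omega
  set t := p ^ d.totient with ht
  have htot : 0 < d.totient := Nat.totient_pos.mpr (by omega)
  have ht3 : 3 ≤ t := le_trans hp3 (Nat.le_self_pow htot.ne' p)
  have h8 : 8 ∣ t - 1 := by
    have hsq : 8 ∣ p ^ 2 - 1 := by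
      obtain ⟨m, rfl⟩ := hodd
      obtain ⟨kk, hkk⟩ := Nat.even_mul_succ_self m
      have hexp : (2 * m + 1) ^ 2 = 4 * (m * (m + 1)) + 1 := by ring
      exact ⟨kk, by omega⟩
    obtain ⟨e0, he0⟩ := Nat.totient_even hd
    have hdvd : p ^ 2 - 1 ∣ t - 1 := by
      have : (p ^ 2 - 1 ^ 2) ∣ ((p ^ 2) ^ e0 - (1 ^ 2) ^ e0) :=
        Nat.sub_dvd_pow_sub_pow _ _ e0
      simpa [ht, ← pow_mul, show 2 * e0 = d.totient by omega] using this
    exact hsq.trans hdvd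
  have ht1 : t - 1 ≠ 0 := by omega
  set c := (t - 1).factorization 2 with hc
  set u0 := (t - 1) / 2 ^ c with hu0
  have hfac : 2 ^ c * u0 = t - 1 := Nat.ordProj_mul_ordCompl_eq_self (t - 1) 2
  have hu0odd : Odd u0 := by
    have h2 : ¬ 2 ∣ u0 := Nat.not_dvd_ordCompl Nat.prime_two ht1
    exact Nat.odd_iff.mpr (by omega)
  have hc3 : 3 ≤ c :=
    (Nat.Prime.pow_dvd_iff_le_factorization Nat.prime_two ht1).mp
      (show 2 ^ 3 ∣ t - 1 by norm_num; exact h8)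
  set e := d.factorization 2 with he
  set d' := d / 2 ^ e with hd'
  have hdfac : 2 ^ e * d' = d := Nat.ordProj_mul_ordCompl_eq_self d 2
  have hd'odd : Odd d' := by
    have h2 : ¬ 2 ∣ d' := Nat.not_dvd_ordCompl Nat.prime_two (show d ≠ 0 by omega)
    exact Nat.odd_iff.mpr (by omega)
  have hd'pos : 0 < d' := hd'odd.pos
  -- the bound
  refine ⟨c + 1, fun j hj u hu => ?_⟩
  obtain ⟨a, rfl⟩ := Nat.exists_eq_add_of_le hj
  set s := d.totient * 2 ^ (a + e) with hs
  have hteq : 1 + 2 ^ c * u0 = t := by omega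
  obtain ⟨v, hvodd, hvpow⟩ := pow_two_pow c u0 hu0odd (by omega) (a + e)
  rw [hteq] at hvpow
  have hpst : p ^ s = t ^ 2 ^ (a + e) := by rw [hs, pow_mul]
  have hps : p ^ s = 1 + 2 ^ (c + a + e) * v := by
    rw [hpst, hvpow, show c + (a + e) = c + a + e by omega]
  have hhalf' : 2 ^ (c + a) * d = 2 ^ (c + a + e) * d' := by
    rw [← hdfac, ← mul_assoc, ← pow_add]
  have hN' : 2 ^ (c + 1 + a) * d = 2 ^ (c + 1 + a + e) * d' := by
    rw [← hdfac, ← mul_assoc, ← pow_add]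
  have hN2 : 2 ^ (c + 1 + a) * d = 2 * (2 ^ (c + a) * d) := by
    rw [show c + 1 + a = (c + a) + 1 by omega, pow_succ]; ring
  haveI : NeZero (2 ^ (c + 1 + a) * d) := ⟨by positivity⟩
  -- integer divisibility
  have hdt : d ∣ t - 1 :=
    (Nat.modEq_iff_dvd' (by omega)).mp (Nat.ModEq.pow_totient hcop).symm
  have hd'ps : (d' : ℤ) ∣ (p : ℤ) ^ s - 1 := by
    have h1 : d' ∣ p ^ s - 1 := by
      have h2 : t - 1 ∣ t ^ 2 ^ (a + e) - 1 := by
        have := Nat.sub_dvd_pow_sub_pow t 1 (2 ^ (a + e))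
        simpa using this
      exact dvd_trans (dvd_trans ⟨2 ^ e, by rw [← hdfac]; ring⟩ hdt) (hpst ▸ h2)
    have hps1 : 1 ≤ p ^ s := Nat.one_le_pow _ _ (by omega)
    have := Int.natCast_dvd_natCast.mpr h1
    rwa [Nat.cast_sub hps1, Nat.cast_pow, Nat.cast_one] at this
  have hA : (p : ℤ) ^ s - (1 + ((2 ^ (c + a) * d : ℕ) : ℤ))
      = 2 ^ (c + a + e) * ((v : ℤ) - (d' : ℤ)) := by
    have h1 : ((p ^ s : ℕ) : ℤ) = 1 + 2 ^ (c + a + e) * (v : ℤ) := by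
      rw [hps]; push_cast; ring
    have h2 : ((2 ^ (c + a) * d : ℕ) : ℤ) = 2 ^ (c + a + e) * (d' : ℤ) := by
      rw [hhalf']; push_cast; ring
    push_cast at h1
    rw [h2, h1]; ring
  have hdvd1 : (2 : ℤ) ^ (c + 1 + a + e) ∣
      (p : ℤ) ^ s - (1 + ((2 ^ (c + a) * d : ℕ) : ℤ)) := by
    rw [hA]
    obtain ⟨m1, hm1⟩ := hvodd
    obtain ⟨m2, hm2⟩ := hd'odd
    have heven : (2 : ℤ) ∣ (v : ℤ) - (d' : ℤ) :=
      ⟨(m1 : ℤ) - (m2 : ℤ), by omega⟩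
    obtain ⟨q, hq⟩ := heven
    exact ⟨q, by rw [hq, show c + 1 + a + e = (c + a + e) + 1 by omega, pow_succ]; ring⟩
  have hdvd2 : (d' : ℤ) ∣ (p : ℤ) ^ s - (1 + ((2 ^ (c + a) * d : ℕ) : ℤ)) := by
    have h2 : ((2 ^ (c + a) * d : ℕ) : ℤ) = 2 ^ (c + a + e) * (d' : ℤ) := by
      rw [hhalf']; push_cast; ring
    rw [h2, show (p : ℤ) ^ s - (1 + 2 ^ (c + a + e) * (d' : ℤ))
      = ((p : ℤ) ^ s - 1) - 2 ^ (c + a + e) * (d' : ℤ) by ring]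
    exact dvd_sub hd'ps (Dvd.intro_left _ rfl)
  have hcop2 : IsCoprime ((2 : ℤ) ^ (c + 1 + a + e)) ((d' : ℤ)) := by
    have : Nat.Coprime (2 ^ (c + 1 + a + e)) d' :=
      Nat.Coprime.pow_left _ (Nat.coprime_two_left.mpr hd'odd)
    have := Nat.isCoprime_iff_coprime.mpr this
    push_cast at this
    exact this
  have hdvdN : ((2 ^ (c + 1 + a) * d : ℕ) : ℤ) ∣
      (p : ℤ) ^ s - (1 + ((2 ^ (c + a) * d : ℕ) : ℤ)) := by
    have := hcop2.mul_dvd hdvd1 hdvd2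
    have hNc : ((2 ^ (c + 1 + a) * d : ℕ) : ℤ) = (2 : ℤ) ^ (c + 1 + a + e) * (d' : ℤ) := by
      rw [hN']; push_cast; ring
    rwa [hNc]
  -- conclude in ZMod
  have hz : ((p : ZMod (2 ^ (c + 1 + a) * d))) ^ s
      = ((1 + 2 ^ (c + a) * d : ℕ) : ZMod (2 ^ (c + 1 + a) * d)) := by
    have h0 := (ZMod.intCast_zmod_eq_zero_iff_dvd
      ((p : ℤ) ^ s - (1 + ((2 ^ (c + a) * d : ℕ) : ℤ))) (2 ^ (c + 1 + a) * d)).mpr hdvdN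
    push_cast at h0 ⊢
    linear_combination h0
  refine isBalanced_of_swap _ _ (u ^ s)
    (Subgroup.pow_mem _ (Subgroup.mem_zpowers u) s) (fun x => ?_)
  refine swap_key _ (2 ^ (c + a) * d) hN2 ?_ (by positivity) x (u ^ s) ?_
  · exact (Nat.even_pow.mpr ⟨even_two, by omega⟩).mul_right d
  · rw [Units.val_pow_eq_pow_val, hu, hz]
end

section
/- Let p be an odd prime, f ≥ 1, and d a positive even integer dividing 2(p^f - 1) such that 2(p^f - 1)/d is odd and 4 | d. Then p^f ≡ d/2 + 1 (mod d), and hence the cyclic subgroup ⟨p⟩ of (ℤ/dℤ)ˣ contains d/2 + 1 and is balanced. -/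
theorem pf_cong_half_add_one (p f d : ℕ) (hp : p.Prime) (hodd : Odd p) (hf : 1 ≤ f)
    (hd0 : 0 < d) (h4 : 4 ∣ d) (hdvd : d ∣ 2 * (p ^ f - 1))
    (hq : Odd (2 * (p ^ f - 1) / d)) :
    p ^ f ≡ d / 2 + 1 [MOD d] ∧
    ∀ u : (ZMod d)ˣ, (u : ZMod d) = (p : ZMod d) →
      (∃ v ∈ Subgroup.zpowers u, (v : ZMod d) = ((d / 2 : ℕ) : ZMod d) + 1) ∧
      IsBalanced d (Subgroup.zpowers u) := by
  have hp1 : 1 ≤ p ^ f := Nat.one_le_pow _ _ hp.pos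
  have hdq : d * (2 * (p ^ f - 1) / d) = 2 * (p ^ f - 1) := Nat.mul_div_cancel' hdvd
  obtain ⟨m, hm⟩ := hq
  rw [hm] at hdq
  have h1 : 2 * (d * m) + d = 2 * (p ^ f - 1) := by rw [← hdq]; ring
  have hpf : p ^ f = d * m + d / 2 + 1 := by omega
  have hmod : p ^ f ≡ d / 2 + 1 [MOD d] :=
    ((Nat.modEq_iff_dvd' (by omega)).mpr ⟨m, by omega⟩).symm
  refine ⟨hmod, ?_⟩
  haveI : NeZero d := ⟨by omega⟩
  have hd2 : 2 * (d / 2) = d := by omega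
  -- the distinguished element c = d/2 in ZMod d
  set c : ZMod d := ((d / 2 : ℕ) : ZMod d) with hc
  have hcast : (p : ZMod d) ^ f = c + 1 := by
    have := (ZMod.natCast_eq_natCast_iff _ _ _).mpr hmod
    rw [Nat.cast_pow, Nat.cast_add, Nat.cast_one] at this
    exact this
  -- every unit has odd val
  have hvodd : ∀ x : (ZMod d)ˣ, Odd ((x : ZMod d)).val := by
    intro x
    rcases Nat.even_or_odd ((x : ZMod d)).val with he | ho
    · exfalso
      have hcop := ZMod.val_coe_unit_coprime x
      have h2 : (2 : ℕ) ∣ Nat.gcd ((x : ZMod d)).val d :=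
        Nat.dvd_gcd he.two_dvd (by omega)
      rw [hcop] at h2
      omega
    · exact ho
  -- multiplication by c fixes c... rather x * c = c for units x
  have hmulc : ∀ x : (ZMod d)ˣ, (x : ZMod d) * c = c := by
    intro x
    obtain ⟨j, hj⟩ := hvodd x
    have hx : (((x : ZMod d)).val : ZMod d) = (x : ZMod d) := ZMod.natCast_zmod_val _
    have hnat : ((x : ZMod d)).val * (d / 2) = j * d + d / 2 := by
      rw [hj]; nlinarith [hd2]
    calc (x : ZMod d) * c = ((((x : ZMod d)).val * (d / 2) : ℕ) : ZMod d) := by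
          rw [Nat.cast_mul, hx]
      _ = ((j * d + d / 2 : ℕ) : ZMod d) := by rw [hnat]
      _ = c := by push_cast [ZMod.natCast_self]; ring
  -- val of x + c
  have hvaladd : ∀ x : (ZMod d)ˣ, (((x : ZMod d) + c).val = ((x : ZMod d)).val + d / 2 - d ∧ d / 2 ≤ ((x : ZMod d)).val) ∨
      (((x : ZMod d) + c).val = ((x : ZMod d)).val + d / 2 ∧ ((x : ZMod d)).val < d / 2) := by
    intro x
    have hlt : ((x : ZMod d)).val < d := ZMod.val_lt _
    obtain ⟨j, hj⟩ := hvodd x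
    have hcd : c.val = d / 2 := by
      rw [hc, ZMod.val_natCast, Nat.mod_eq_of_lt (by omega)]
    have hadd : ((x : ZMod d) + c).val = (((x : ZMod d)).val + d / 2) % d := by
      rw [ZMod.val_add, hcd]
    have hde : (2 : ℕ) ∣ d / 2 := by omega
    rcases Nat.lt_or_ge ((x : ZMod d)).val (d / 2) with h | h
    · right
      rw [hadd, Nat.mod_eq_of_lt (by omega)]
      exact ⟨rfl, h⟩
    · left
      rw [hadd, Nat.mod_eq_sub_mod (by omega), Nat.mod_eq_of_lt (by omega)]
      exact ⟨rfl, h⟩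
  intro u hu
  -- w = u ^ f has coercion c + 1
  set w : (ZMod d)ˣ := u ^ f with hwdef
  have hw : (w : ZMod d) = c + 1 := by
    rw [hwdef, Units.val_pow_eq_pow_val, hu, hcast]
  have hwmem : w ∈ Subgroup.zpowers u := ⟨(f : ℤ), by rw [show ((f : ℤ)) = (f : ℤ) from rfl]; show u ^ (f : ℤ) = w; rw [zpow_natCast]⟩
  refine ⟨⟨w, hwmem, hw⟩, ?_⟩
  -- key: coercion of x * w is x + c
  have hxw : ∀ x : (ZMod d)ˣ, ((x * w : (ZMod d)ˣ) : ZMod d) = (x : ZMod d) + c := by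
    intro x
    rw [Units.val_mul, hw, mul_add, mul_one, hmulc, add_comm]
  intro g
  set H := Subgroup.zpowers u with hH
  set S₁ := {x : (ZMod d)ˣ | (∃ h ∈ H, x = g * h) ∧ 2 * ((x : ZMod d)).val < d} with hS₁
  set S₂ := {x : (ZMod d)ˣ | (∃ h ∈ H, x = g * h) ∧ d < 2 * ((x : ZMod d)).val} with hS₂
  have hww : w * w = 1 := by
    ext
    rw [Units.val_mul, hw, Units.val_one]
    have : c * c = 0 := by
      rw [hc, ← Nat.cast_mul]
      obtain ⟨k, hk⟩ := h4
      have : d / 2 * (d / 2) = d * k := by subst hk; rw [show 4 * k / 2 = 2 * k by omega]; ring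
      rw [this, Nat.cast_mul, ZMod.natCast_self, zero_mul]
    have hcc : c + c = 0 := by
      rw [hc, ← Nat.cast_add, show d / 2 + d / 2 = d by omega, ZMod.natCast_self]
    linear_combination this + hcc
  -- key inequalities for the swap
  have hkey₁ : ∀ x : (ZMod d)ˣ, 2 * ((x : ZMod d)).val < d → d < 2 * (((x * w : (ZMod d)ˣ) : ZMod d)).val := by
    intro x hx
    obtain ⟨j, hj⟩ := hvodd x
    rcases hvaladd x with ⟨h, hge⟩ | ⟨h, _⟩
    · rw [← hxw x] at h; omega
    · rw [← hxw x] at h; omega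
  have hkey₂ : ∀ x : (ZMod d)ˣ, d < 2 * ((x : ZMod d)).val → 2 * (((x * w : (ZMod d)ˣ) : ZMod d)).val < d := by
    intro x hx
    have hlt : ((x : ZMod d)).val < d := ZMod.val_lt _
    rcases hvaladd x with ⟨h, hge⟩ | ⟨h, hlt2⟩
    · rw [← hxw x] at h; omega
    · omega
  have hcoset : ∀ x : (ZMod d)ˣ, (∃ h ∈ H, x = g * h) → (∃ h ∈ H, x * w = g * h) := by
    rintro x ⟨h, hh, rfl⟩
    exact ⟨h * w, mul_mem hh hwmem, mul_assoc g h w⟩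
  have himg : S₂ = (· * w) '' S₁ := by
    ext y
    constructor
    · rintro ⟨hy, hlt⟩
      refine ⟨y * w, ⟨hcoset y hy, hkey₂ y hlt⟩, ?_⟩
      simp only [mul_assoc, hww, mul_one]
    · rintro ⟨x, ⟨hxc, hxlt⟩, rfl⟩
      exact ⟨hcoset x hxc, hkey₁ x hxlt⟩
  rw [himg, Set.ncard_image_of_injective _ (mul_left_injective w)]
end

section
/- Let d > 4 be an integer with 4 | d and suppose d/2 + 1 ∈ ⟨p⟩ ⊆ (ℤ/dℤ)ˣ for an odd prime p coprime to d. Then -1 ∉ ⟨p⟩ implies d does not divide p^g + 1 for any g ≥ 1; in fact, if d > 4 and d | 2(p^f-1) with odd quotient, then d ∤ p^g + 1 for all g ≥ 1. -/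
theorem not_dvd_pow_add_one (p f d : ℕ) (hp : p.Prime) (hodd : Odd p) (hf : 1 ≤ f)
    (hd : 4 < d) (h4 : 4 ∣ d) (hdvd : d ∣ 2 * (p ^ f - 1))
    (hq : Odd (2 * (p ^ f - 1) / d)) :
    ∀ g : ℕ, 1 ≤ g → ¬ d ∣ p ^ g + 1 := by
  intro g hg hdg
  obtain ⟨m, hm⟩ := h4
  have hm2 : 2 ≤ m := by omega
  have hp3 : 3 ≤ p := by
    rcases hodd with ⟨t, ht⟩
    have := hp.two_le
    omega
  have hpf1 : 1 ≤ p ^ f := Nat.one_le_pow _ _ (by omega)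
  -- get the key equation: p ^ f = d * k + 2 * m + 1
  obtain ⟨q, hq'⟩ := hdvd
  have hqq : 2 * (p ^ f - 1) / d = q := by
    rw [hq', Nat.mul_div_cancel_left _ (by omega : 0 < d)]
  rw [hqq] at hq
  obtain ⟨k, hk⟩ := hq
  have hE : p ^ f = 2 * (m * (2 * k + 1)) + 1 := by
    have h1 : 2 * (p ^ f - 1) = 4 * (m * (2 * k + 1)) := by
      rw [hq', hk, hm]; ring
    omega
  -- g is odd
  have h4g : 4 ∣ p ^ g + 1 := dvd_trans ⟨m, hm⟩ hdg
  have hgodd : Odd g := by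
    rcases Nat.even_or_odd g with he | ho
    · exfalso
      obtain ⟨t, ht⟩ := he
      obtain ⟨s, hs⟩ : Odd (p ^ t) := hodd.pow
      have : p ^ g = (p ^ t) ^ 2 := by rw [ht, ← pow_mul]; ring_nf
      rw [this, hs] at h4g
      have : (2 * s + 1) ^ 2 = 4 * (s * s + s) + 1 := by ring
      omega
    · exact ho
  obtain ⟨j, hj⟩ := hgodd
  -- move to ZMod d
  haveI : NeZero d := ⟨by omega⟩
  set c : ZMod d := ((2 * m : ℕ) : ZMod d) with hc
  have hd0 : ((d : ℕ) : ZMod d) = 0 := ZMod.natCast_self d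
  have h2c : c + c = 0 := by
    rw [hc]
    have : ((2 * m : ℕ) : ZMod d) + ((2 * m : ℕ) : ZMod d) = ((d : ℕ) : ZMod d) := by
      rw [hm]; push_cast; ring
    rw [this, hd0]
  have hc2 : c * c = 0 := by
    rw [hc]
    have : ((2 * m : ℕ) : ZMod d) * ((2 * m : ℕ) : ZMod d)
        = ((d : ℕ) : ZMod d) * (m : ℕ) := by rw [hm]; push_cast; ring
    rw [this, hd0, zero_mul]
  have hm0 : (4 : ZMod d) * (m : ℕ) = 0 := by
    have : ((4 * m : ℕ) : ZMod d) = 0 := by rw [← hm]; exact hd0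
    push_cast at this; linear_combination this
  have hEz : ((p : ZMod d)) ^ f = 1 + c := by
    have h2 : ((p ^ f : ℕ) : ZMod d) = ((2 * (m * (2 * k + 1)) + 1 : ℕ) : ZMod d) := by rw [hE]
    push_cast at h2
    rw [hc]
    push_cast
    rw [h2]
    linear_combination (k : ZMod d) * hm0
  have hGz : ((p : ZMod d)) ^ g = -1 := by
    have : ((p ^ g + 1 : ℕ) : ZMod d) = 0 := (ZMod.natCast_eq_zero_iff _ _).mpr hdg
    push_cast at this
    linear_combination this
  have key : ∀ n : ℕ, (1 + c) ^ n = 1 + (n : ZMod d) * c := by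
    intro n
    induction n with
    | zero => simp
    | succ i ih =>
      rw [pow_succ, ih]
      push_cast
      linear_combination (i : ZMod d) * hc2
  -- compute p^(f*g) two ways
  have hfg1 : ((p : ZMod d)) ^ (f * g) = 1 + c := by
    rw [pow_mul, hEz, key g]
    rw [hj]
    push_cast
    have : ((2 * j + 1 : ZMod d)) * c = 1 * c + (j : ZMod d) * (c + c) := by ring
    rw [this, h2c, mul_zero, add_zero, one_mul]
  have hfg2 : ((p : ZMod d)) ^ (f * g) = (-1) ^ f := by
    rw [mul_comm, pow_mul, hGz]
  rcases Nat.even_or_odd f with hfe | hfo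
  · -- f even: (-1)^f = 1, so c = 0, so d ∣ 2m, contradiction
    rw [hfe.neg_one_pow] at hfg2
    have hc0 : c = 0 := by
      have h0 := hfg1.symm.trans hfg2
      linear_combination h0
    rw [hc] at hc0
    have : d ∣ 2 * m := (ZMod.natCast_eq_zero_iff _ _).mp hc0
    have := Nat.le_of_dvd (by omega) this
    omega
  · -- f odd: -1 = 1 + c, so d ∣ 2m + 2, contradiction
    rw [hfo.neg_one_pow] at hfg2
    have hceq : ((2 * m + 2 : ℕ) : ZMod d) = 0 := by
      have h1 : (1 : ZMod d) + c = -1 := hfg1.symm.trans hfg2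
      have hc' : c = 2 * ((m : ℕ) : ZMod d) := by rw [hc]; push_cast; ring
      push_cast at h1 ⊢
      linear_combination h1 - hc'
    have : d ∣ 2 * m + 2 := (ZMod.natCast_eq_zero_iff _ _).mp hceq
    have := Nat.le_of_dvd (by omega) this
    omega
end

section
/- Let k be a finite field of odd characteristic, λ the nontrivial quadratic character of kˣ, and χ a multiplicative character of kˣ (both extended to k by sending 0 to 0). Then the Jacobi sum J(λ, χ) = Σ_{u ∈ k} λ(u)χ(-1-u) satisfies J(λ, χ) ≡ 1 (mod 2) in the ring of integers of the cyclotomic field generated by the values of χ. -/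
open scoped BigOperators

theorem jacobi_sum_cong_one_mod_two (k : Type*) [Field k] [Fintype k]
    (hchar : ringChar k ≠ 2) (lam χ : MulChar k ℂ)
    (hlam : lam.IsQuadratic) (hlam1 : lam ≠ 1) :
    ∃ z ∈ Subring.closure (Set.range (χ : k → ℂ)),
      (∑ u : k, lam u * χ (-1 - u)) = 1 + 2 * z := by
  classical
  set R := Subring.closure (Set.range (χ : k → ℂ)) with hR
  have hmem : ∀ x : k, χ x ∈ R := fun x =>
    Subring.subset_closure (Set.mem_range_self x)
  have hlamsum : ∑ u : k, lam u = 0 := MulChar.sum_eq_zero_of_ne_one hlam1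
  have hneg1 : lam (-1) * lam (-1) = 1 := by
    rw [← map_mul]; norm_num
  have hchi_neg1 : χ (-1) * χ (-1) = 1 := by
    rw [← map_mul]; norm_num
  rcases eq_or_ne χ 1 with hχ | hχ
  · -- χ trivial case
    subst hχ
    have hS : (∑ u : k, lam u * (1 : MulChar k ℂ) (-1 - u)) = - lam (-1) := by
      have key : ∀ u : k, lam u * (1 : MulChar k ℂ) (-1 - u) =
          lam u - (if u = -1 then lam u else 0) := by
        intro u
        by_cases h : u = -1
        · simp [h, MulChar.map_nonunit]
        · have hu : IsUnit (-1 - u) := by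
            apply Ne.isUnit
            intro h0
            exact h (by linear_combination - sub_eq_zero.mp h0)
          simp [h, MulChar.one_apply hu]
      rw [Finset.sum_congr rfl fun u _ => key u, Finset.sum_sub_distrib, hlamsum,
        Finset.sum_ite_eq' Finset.univ (-1 : k) (fun u => lam u)]
      simp
    rcases mul_self_eq_one_iff.mp hneg1 with h1 | h1
    · exact ⟨-1, neg_mem R.one_mem, by rw [hS, h1]; ring⟩
    · exact ⟨0, R.zero_mem, by rw [hS, h1]; ring⟩
  · -- χ nontrivial
    have hchisum : ∑ u : k, χ (-1 - u) = 0 := by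
      rw [show (∑ u : k, χ (-1 - u)) = ∑ v : k, χ v from
        Fintype.sum_equiv (Equiv.subLeft (-1 : k)) _ _ (fun u => rfl)]
      exact MulChar.sum_eq_zero_of_ne_one hχ
    set S := ∑ u : k, lam u * χ (-1 - u) with hSdef
    set q := Fintype.card k with hq
    have key : ∑ u : k, (lam u - 1) * (χ (-1 - u) - 1) = S + q := by
      have e : ∀ u : k, (lam u - 1) * (χ (-1 - u) - 1) =
          lam u * χ (-1 - u) - lam u - χ (-1 - u) + 1 := fun u => by ring
      rw [Finset.sum_congr rfl fun u _ => e u]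
      simp only [Finset.sum_add_distrib, Finset.sum_sub_distrib, hlamsum,
        Finset.sum_const, Finset.card_univ, nsmul_eq_mul, mul_one]
      rw [hchisum]
      ring
    have h0 : (lam 0 - 1) * (χ (-1 - 0) - 1) = 1 - χ (-1) := by
      rw [lam.map_nonunit (by simp)]
      ring_nf
    set w : k → ℂ := fun u => if lam u = 1 then 0 else 1 - χ (-1 - u) with hw
    have hwmem : ∀ u, w u ∈ R := by
      intro u
      by_cases h : lam u = 1 <;> simp only [hw, h, if_true, if_false]
      · exact R.zero_mem
      · exact R.sub_mem R.one_mem (hmem _)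
    have hterm : ∀ u : k, u ≠ 0 → (lam u - 1) * (χ (-1 - u) - 1) = 2 * w u := by
      intro u hu
      have hne : lam u ≠ 0 := by
        intro h0
        have h1 : lam u * lam u⁻¹ = 1 := by
          rw [← map_mul, mul_inv_cancel₀ hu, map_one]
        rw [h0, zero_mul] at h1
        exact zero_ne_one h1
      rcases hlam u with h | h | h
      · exact absurd h hne
      · simp [hw, h]
      · have h1 : lam u ≠ 1 := by rw [h]; norm_num
        simp only [hw, h1, if_false]
        rw [h]; ring
    -- split the sum at u = 0
    have hsplit : ∑ u : k, (lam u - 1) * (χ (-1 - u) - 1)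
        = (∑ u ∈ Finset.univ \ {0}, (lam u - 1) * (χ (-1 - u) - 1)) + (1 - χ (-1)) := by
      rw [Finset.sum_eq_sum_sdiff_singleton_add (Finset.mem_univ (0 : k)), h0]
    set z₁ := ∑ u ∈ Finset.univ \ {(0 : k)}, w u with hz₁
    have hz₁mem : z₁ ∈ R := Subring.sum_mem R fun u _ => hwmem u
    have hsum2 : ∑ u ∈ Finset.univ \ {(0 : k)}, (lam u - 1) * (χ (-1 - u) - 1) = 2 * z₁ := by
      rw [hz₁, Finset.mul_sum]
      refine Finset.sum_congr rfl fun u hu => ?_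
      have : u ≠ 0 := by
        simp only [Finset.mem_sdiff, Finset.mem_singleton] at hu
        exact hu.2
      exact hterm u this
    have hSval : S = 2 * z₁ + (1 - χ (-1)) - q := by
      have h2 := key
      rw [hsplit, hsum2] at h2
      linear_combination -h2
    -- q is odd
    obtain ⟨m, hm⟩ : ∃ m : ℕ, q = 2 * m + 1 := by
      have := FiniteField.odd_card_of_char_ne_two hchar
      exact ⟨q / 2, by omega⟩
    have hqC : (q : ℂ) = 2 * m + 1 := by exact_mod_cast congrArg (Nat.cast : ℕ → ℂ) hm
    have hmmem : ((m : ℂ)) ∈ R := by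
      have := natCast_mem R m
      exact_mod_cast this
    rcases mul_self_eq_one_iff.mp hchi_neg1 with h1 | h1
    · refine ⟨z₁ - (m + 1), R.sub_mem hz₁mem (R.add_mem hmmem R.one_mem), ?_⟩
      rw [hSval, h1, hqC]; ring
    · refine ⟨z₁ - m, R.sub_mem hz₁mem hmmem, ?_⟩
      rw [hSval, h1, hqC]; ring
end

section
/- Let e ≥ 1 and let ζ be a primitive e-th root of unity in ℂ. The only roots of unity in the ring ℤ[ζ] that are congruent to 1 modulo the ideal 2ℤ[ζ] are 1 and -1. -/
private lemma half_not_integral : ¬ IsIntegral ℤ ((1:ℂ)/2) := by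
  intro h
  have h1 : ((1:ℂ)/2) = algebraMap ℚ ℂ (1/2) := by norm_num
  rw [h1] at h
  have h2 : IsIntegral ℤ ((1:ℚ)/2) :=
    (isIntegral_algebraMap_iff (algebraMap ℚ ℂ).injective).mp h
  obtain ⟨y, hy⟩ := IsIntegrallyClosed.isIntegral_iff.mp h2
  have : (y : ℚ) = 1/2 := hy
  have h3 : ((2 * y : ℤ) : ℚ) = 1 := by push_cast; linarith
  have : (2 * y : ℤ) = 1 := by exact_mod_cast h3
  omega

private lemma pow_cong (ω z : ℂ) (hωi : IsIntegral ℤ ω) (hzi : IsIntegral ℤ z)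
    (heq : ω - 1 = 2 * z) : ∀ k : ℕ, ∃ t : ℂ, IsIntegral ℤ t ∧ ω ^ k - 1 = 2 * t := by
  intro k
  induction k with
  | zero => exact ⟨0, isIntegral_zero, by ring⟩
  | succ n ih =>
    obtain ⟨t, hti, ht⟩ := ih
    refine ⟨ω * t + z, (hωi.mul hti).add hzi, ?_⟩
    have : ω ^ (n+1) - 1 = ω * (ω ^ n - 1) + (ω - 1) := by ring
    rw [this, ht, heq]; ring

private lemma odd_case (m : ℕ) (hm : Odd m) (ω z : ℂ) (hωi : IsIntegral ℤ ω)
    (hzi : IsIntegral ℤ z) (heq : ω - 1 = 2 * z) (h : ω ^ m = 1) : ω = 1 := by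
  by_contra hne
  have hgeom : ∑ i ∈ Finset.range m, ω ^ i = 0 := by
    rw [geom_sum_eq hne, h]; simp
  -- choose t_i for each i
  choose t hti ht using pow_cong ω z hωi hzi heq
  have hsum : (m : ℂ) = -2 * ∑ i ∈ Finset.range m, t i := by
    have : ∑ i ∈ Finset.range m, ((1:ℂ) - ω ^ i) = (m : ℂ) := by
      rw [Finset.sum_sub_distrib, hgeom]; simp
    rw [← this]
    rw [Finset.mul_sum]
    apply Finset.sum_congr rfl
    intro i _
    have := ht i
    linear_combination -this
  obtain ⟨j, hj⟩ := hm
  apply half_not_integral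
  have hT : IsIntegral ℤ (∑ i ∈ Finset.range m, t i) :=
    IsIntegral.sum _ (fun i _ => hti i)
  have hJ : IsIntegral ℤ (-(∑ i ∈ Finset.range m, t i) - (j:ℤ) • (1:ℂ)) :=
    hT.neg.sub (IsIntegral.smul _ isIntegral_one)
  have : ((1:ℂ)/2) = -(∑ i ∈ Finset.range m, t i) - (j:ℤ) • (1:ℂ) := by
    have hm' : (m : ℂ) = 2*(j:ℂ) + 1 := by exact_mod_cast congrArg (Nat.cast : ℕ → ℂ) hj
    simp only [zsmul_eq_mul]
    push_cast
    linear_combination (hsum - hm') / 2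
  rw [this]; exact hJ

private lemma two_pow_case (s : ℕ) : ∀ ω z : ℂ, IsIntegral ℤ ω → IsIntegral ℤ z →
    ω - 1 = 2 * z → ω ^ (2 ^ s) = 1 → ω = 1 ∨ ω = -1 := by
  induction s with
  | zero => intro ω z _ _ _ h; left; simpa using h
  | succ n ih =>
    intro ω z hωi hzi heq h
    have hsq : (ω ^ 2) ^ (2 ^ n) = 1 := by
      rw [← pow_mul, ← pow_succ']; exact h
    have heq2 : ω ^ 2 - 1 = 2 * (z * (ω + 1)) := by
      have : ω ^ 2 - 1 = (ω - 1) * (ω + 1) := by ring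
      rw [this, heq]; ring
    have := ih (ω ^ 2) (z * (ω + 1)) (hωi.pow 2) (hzi.mul (hωi.add isIntegral_one)) heq2 hsq
    rcases this with h1 | h1
    · have : (ω - 1) * (ω + 1) = 0 := by linear_combination h1
      rcases mul_eq_zero.mp this with h2 | h2
      · left; linear_combination h2
      · right; linear_combination h2
    · -- ω^2 = -1 : contradiction
      exfalso
      apply half_not_integral
      have hzz : z * z + z = -(1/2 : ℂ) := by
        have hω : ω = 1 + 2 * z := by linear_combination heq
        have : (1 + 2*z)^2 = -1 := by rw [← hω]; exact h1
        linear_combination this / 4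
      have : ((1:ℂ)/2) = -(z * z + z) := by rw [hzz]; ring
      rw [this]
      exact ((hzi.mul hzi).add hzi).neg

theorem roots_of_unity_cong_one_mod_two (e : ℕ) (he : 1 ≤ e) (ζ : ℂ)
    (hζ : IsPrimitiveRoot ζ e) (ω : ℂ) (hω : ω ∈ Algebra.adjoin ℤ ({ζ} : Set ℂ))
    (hru : ∃ n : ℕ, 0 < n ∧ ω ^ n = 1)
    (hcong : ∃ z ∈ Algebra.adjoin ℤ ({ζ} : Set ℂ), ω - 1 = 2 * z) :
    ω = 1 ∨ ω = -1 := by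
  obtain ⟨z, hzmem, heq⟩ := hcong
  obtain ⟨n, hn, hωn⟩ := hru
  have hζint : IsIntegral ℤ ζ := by
    refine ⟨Polynomial.X ^ e - 1, ?_, ?_⟩
    · apply Polynomial.monic_X_pow_sub_C _ (by omega)
    · simp [hζ.pow_eq_one]
  have hfg := hζint.fg_adjoin_singleton
  have hωi : IsIntegral ℤ ω := .of_mem_of_fg _ hfg _ hω
  have hzi : IsIntegral ℤ z := .of_mem_of_fg _ hfg _ hzmem
  obtain ⟨s, m, hm2, hnm⟩ := Nat.exists_eq_pow_mul_and_not_dvd (p := 2) (by omega : n ≠ 0) (by norm_num)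
  have hodd : Odd m := Nat.odd_iff.mpr (by simpa [Nat.two_dvd_ne_zero] using hm2)
  -- ω^(2^s) has odd order m
  have hpow : (ω ^ (2^s)) ^ m = 1 := by rw [← pow_mul, ← hnm]; exact hωn
  obtain ⟨t, hti, ht⟩ := pow_cong ω z hωi hzi heq (2^s)
  have h1 : ω ^ (2^s) = 1 := odd_case m hodd _ t (hωi.pow _) hti ht hpow
  exact two_pow_case s ω z hωi hzi heq h1
end

section
/- Let p be an odd prime, f ≥ 1, d = 2(p^f - 1), q ≡ 1 (mod d) a power of p, and K = F_q(u) with u^d = t. The point R(u) = (u^{-2}, u^{-3}(u² + 1)^{(p^f+1)/2}) lies on the elliptic curve E: y² = x(x+1)(x+t) over K. -/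
theorem point_on_legendre_curve (p f q d : ℕ) (hp : p.Prime) (hodd : Odd p)
    (hf : 1 ≤ f) (hd : d = 2 * (p ^ f - 1))
    (hq : ∃ m : ℕ, 0 < m ∧ q = p ^ m) (hqd : q % d = 1)
    (K0 : Type*) [Field K0] [Fintype K0] [CharP K0 p] (hcard : Fintype.card K0 = q) :
    ((RatFunc.X : RatFunc K0)⁻¹ ^ 3 *
        ((RatFunc.X : RatFunc K0) ^ 2 + 1) ^ ((p ^ f + 1) / 2)) ^ 2 =
      (RatFunc.X : RatFunc K0)⁻¹ ^ 2 *
        ((RatFunc.X : RatFunc K0)⁻¹ ^ 2 + 1) *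
        ((RatFunc.X : RatFunc K0)⁻¹ ^ 2 + (RatFunc.X : RatFunc K0) ^ d) := by
  set X : RatFunc K0 := RatFunc.X with hXdef
  have hX : X ≠ 0 := RatFunc.X_ne_zero
  have hn : 1 ≤ p ^ f := Nat.one_le_pow _ _ hp.pos
  haveI : Fact p.Prime := ⟨hp⟩
  have hchar : CharP (RatFunc K0) p := charP_of_injective_algebraMap
    (algebraMap K0 (RatFunc K0)).injective p
  have hfrob : (X ^ 2 + 1) ^ (p ^ f) = X ^ (2 * p ^ f) + 1 := by
    haveI := hchar
    rw [add_pow_char_pow, one_pow, ← pow_mul]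
  have heven : Even (p ^ f + 1) := by
    rcases hodd.pow (n := f) with ⟨k, hk⟩
    exact ⟨k + 1, by omega⟩
  have hm : (p ^ f + 1) / 2 * 2 = p ^ f + 1 := Nat.div_mul_cancel heven.two_dvd
  have hd2 : 2 * p ^ f = d + 2 := by omega
  have key : X ^ (2 * p ^ f) = X ^ d * X ^ 2 := by rw [hd2, pow_add]
  rw [mul_pow, ← pow_mul, ← pow_mul, hm, pow_succ (X ^ 2 + 1) (p ^ f), hfrob, key]
  field_simp
  have h6 : X ^ 6 * X⁻¹ ^ 6 = 1 := by rw [← mul_pow, mul_inv_cancel₀ hX, one_pow]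
  linear_combination (1 + X ^ 2 * X ^ d + X ^ 2 + X ^ 4 * X ^ d) * h6
end

section
/- Let d > 2 with 4 | d, and suppose p is an odd prime coprime to d such that some power of p is congruent to d/2 + 1 modulo d. Then for every odd divisor e of d, the cyclic subgroup ⟨p⟩ of (ℤ/(d/e)ℤ)ˣ is balanced, provided d/e > 2 and 4 | (d/e). -/
lemma val_mul_special {m : ℕ} (hm : 2 < m) (h4 : 4 ∣ m) (x t : (ZMod m)ˣ)
    (ht : (t : ZMod m) = ((m / 2 + 1 : ℕ) : ZMod m)) :
    ((↑(x * t) : ZMod m)).val = (((x : ZMod m)).val + m / 2) % m := by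
  haveI : NeZero m := ⟨by omega⟩
  have h2 : 2 ∣ m := dvd_trans ⟨2, rfl⟩ h4
  set v := ((x : ZMod m)).val with hv
  have hcop : Nat.Coprime v m := ZMod.val_coe_unit_coprime x
  have hoddv : ¬ 2 ∣ v := by
    intro h
    have := Nat.dvd_gcd h h2
    rw [Nat.Coprime] at hcop
    omega
  obtain ⟨k, hk⟩ : ∃ k, v = 2 * k + 1 := ⟨v / 2, by omega⟩
  have hxv : ((x : ZMod m)) = ((v : ℕ) : ZMod m) := by
    simp [hv, ZMod.natCast_val, ZMod.cast_id]
  have hmul : ((↑(x * t) : ZMod m)) = ((v + m / 2 : ℕ) : ZMod m) := by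
    rw [Units.val_mul, ht, hxv, ← Nat.cast_mul]
    rw [ZMod.natCast_eq_natCast_iff]
    set w := m / 2 with hw
    have hmw : m = 2 * w := by omega
    have heq : v * (w + 1) = k * m + (v + w) := by rw [hk, hmw]; ring
    calc v * (w + 1) % m = (k * m + (v + w)) % m := by rw [heq]
      _ = (v + w) % m := by rw [Nat.add_comm (k * m), Nat.add_mul_mod_self_right]
  rw [hmul, ZMod.val_natCast]

lemma coset_swap_subset {m : ℕ} (hm : 2 < m) (h4 : 4 ∣ m) (u t c : (ZMod m)ˣ)
    (htmem : t ∈ Subgroup.zpowers u)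
    (ht : (t : ZMod m) = ((m / 2 + 1 : ℕ) : ZMod m)) :
    (fun x => x * t) '' {x : (ZMod m)ˣ |
        (∃ h ∈ Subgroup.zpowers u, x = c * h) ∧ 2 * ((x : ZMod m)).val < m} ⊆
      {x : (ZMod m)ˣ | (∃ h ∈ Subgroup.zpowers u, x = c * h) ∧ m < 2 * ((x : ZMod m)).val} := by
  haveI : NeZero m := ⟨by omega⟩
  haveI : Fact (1 < m) := ⟨by omega⟩
  rintro _ ⟨x, ⟨⟨h, hh, rfl⟩, hlt⟩, rfl⟩
  refine ⟨⟨h * t, mul_mem hh htmem, by simp [mul_assoc]⟩, ?_⟩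
  have hval := val_mul_special hm h4 (c * h) t ht
  have hvpos : 0 < (((c * h : (ZMod m)ˣ) : ZMod m)).val := by
    have : (((c * h : (ZMod m)ˣ) : ZMod m)).val ≠ 0 := by
      rw [Ne, ZMod.val_eq_zero]; exact Units.ne_zero _
    omega
  have h2 : 2 ∣ m := dvd_trans ⟨2, rfl⟩ h4
  rw [hval, Nat.mod_eq_of_lt (by omega)]
  omega

lemma coset_swap_subset' {m : ℕ} (hm : 2 < m) (h4 : 4 ∣ m) (u t c : (ZMod m)ˣ)
    (htmem : t ∈ Subgroup.zpowers u)
    (ht : (t : ZMod m) = ((m / 2 + 1 : ℕ) : ZMod m)) :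
    (fun x => x * t) '' {x : (ZMod m)ˣ |
        (∃ h ∈ Subgroup.zpowers u, x = c * h) ∧ m < 2 * ((x : ZMod m)).val} ⊆
      {x : (ZMod m)ˣ | (∃ h ∈ Subgroup.zpowers u, x = c * h) ∧ 2 * ((x : ZMod m)).val < m} := by
  haveI : NeZero m := ⟨by omega⟩
  rintro _ ⟨x, ⟨⟨h, hh, rfl⟩, hlt⟩, rfl⟩
  refine ⟨⟨h * t, mul_mem hh htmem, by simp [mul_assoc]⟩, ?_⟩
  have hval := val_mul_special hm h4 (c * h) t ht
  have hvlt : (((c * h : (ZMod m)ˣ) : ZMod m)).val < m := ZMod.val_lt _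
  have h2 : 2 ∣ m := dvd_trans ⟨2, rfl⟩ h4
  rw [hval, Nat.mod_eq_sub_mod (by omega), Nat.mod_eq_of_lt (by omega)]
  omega

theorem balanced_mod_quotient (d p : ℕ) (hd : 2 < d) (h4 : 4 ∣ d) (hp : p.Prime)
    (hodd : Odd p) (hcop : Nat.Coprime p d)
    (hpow : ∃ g : ℕ, p ^ g ≡ d / 2 + 1 [MOD d]) :
    ∀ e : ℕ, Odd e → e ∣ d → 2 < d / e → 4 ∣ d / e →
      ∀ u : (ZMod (d / e))ˣ, (u : ZMod (d / e)) = (p : ZMod (d / e)) →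
        IsBalanced (d / e) (Subgroup.zpowers u) := by
  obtain ⟨n, hn⟩ := hpow
  intro e he hed h2m h4m
  set m := d / e with hmdef
  intro u hu
  haveI : NeZero m := ⟨by omega⟩
  have hme : m * e = d := Nat.div_mul_cancel hed
  have hmd : m ∣ d := ⟨e, hme.symm⟩
  have h2 : 2 ∣ m := dvd_trans ⟨2, rfl⟩ h4m
  -- p ^ n ≡ m / 2 + 1 [MOD m]
  have h1 : p ^ n ≡ d / 2 + 1 [MOD m] := hn.of_dvd hmd
  have hd2 : d / 2 = e * (m / 2) := by
    rw [← hme, Nat.mul_comm, Nat.mul_div_assoc e h2]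
  obtain ⟨j, hj⟩ := he
  have h3 : e * (m / 2) ≡ m / 2 [MOD m] := by
    have hkey : e * (m / 2) = j * m + m / 2 := by
      have hmw : m = 2 * (m / 2) := by omega
      calc e * (m / 2) = (2 * j + 1) * (m / 2) := by rw [hj]
        _ = j * (2 * (m / 2)) + m / 2 := by ring
        _ = j * m + m / 2 := by rw [← hmw]
    show e * (m / 2) % m = (m / 2) % m
    rw [hkey, Nat.add_comm, Nat.add_mul_mod_self_right]
  have hcong : p ^ n ≡ m / 2 + 1 [MOD m] := by
    refine h1.trans ?_
    rw [hd2]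
    exact h3.add_right 1
  have hcast : ((p : ZMod m)) ^ n = ((m / 2 + 1 : ℕ) : ZMod m) := by
    have := (ZMod.natCast_eq_natCast_iff _ _ _).mpr hcong
    rwa [Nat.cast_pow] at this
  have ht : ((u ^ n : (ZMod m)ˣ) : ZMod m) = ((m / 2 + 1 : ℕ) : ZMod m) := by
    rw [Units.val_pow_eq_pow_val, hu, hcast]
  have htmem : u ^ n ∈ Subgroup.zpowers u := Subgroup.npow_mem_zpowers u n
  intro c
  apply le_antisymm
  · calc {x : (ZMod m)ˣ | (∃ h ∈ Subgroup.zpowers u, x = c * h) ∧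
          2 * ((x : ZMod m)).val < m}.ncard
        = ((fun x => x * u ^ n) '' {x : (ZMod m)ˣ | (∃ h ∈ Subgroup.zpowers u, x = c * h) ∧
          2 * ((x : ZMod m)).val < m}).ncard :=
          (Set.ncard_image_of_injective _ (mul_left_injective _)).symm
      _ ≤ _ := Set.ncard_le_ncard (coset_swap_subset h2m h4m u (u ^ n) c htmem ht)
          (Set.toFinite _)
  · calc {x : (ZMod m)ˣ | (∃ h ∈ Subgroup.zpowers u, x = c * h) ∧
          m < 2 * ((x : ZMod m)).val}.ncard
        = ((fun x => x * u ^ n) '' {x : (ZMod m)ˣ | (∃ h ∈ Subgroup.zpowers u, x = c * h) ∧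
          m < 2 * ((x : ZMod m)).val}).ncard :=
          (Set.ncard_image_of_injective _ (mul_left_injective _)).symm
      _ ≤ _ := Set.ncard_le_ncard (coset_swap_subset' h2m h4m u (u ^ n) c htmem ht)
          (Set.toFinite _)
end

section
/- In (ℤ/39ℤ)ˣ, the cyclic subgroups generated by 7 and by 29 are both balanced, but their intersection, the cyclic subgroup generated by 16, is not balanced. -/
lemma mem_zpow_iff {G : Type*} [Group G] (u : G) (n : ℕ) (hn : 0 < n) (hu : u ^ n = 1)
    (x : G) : x ∈ Subgroup.zpowers u ↔ ∃ k < n, u ^ k = x := by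
  constructor
  · rintro ⟨m, rfl⟩
    refine ⟨(m % (n : ℤ)).toNat, ?_, ?_⟩
    · have h1 : m % (n : ℤ) < n := Int.emod_lt_of_pos m (by exact_mod_cast hn)
      omega
    · have h0 : (0:ℤ) ≤ m % (n : ℤ) := Int.emod_nonneg m (by positivity)
      show u ^ ((m % (n : ℤ)).toNat) = u ^ m
      have hm : u ^ m = u ^ (m % (n : ℤ)) := by
        conv_lhs => rw [← Int.emod_add_mul_ediv m (n : ℤ)]
        rw [zpow_add, zpow_mul, zpow_natCast, hu, one_zpow, mul_one]
      rw [hm, ← zpow_natCast, Int.toNat_of_nonneg h0]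
  · rintro ⟨k, -, rfl⟩
    exact ⟨(k : ℤ), zpow_natCast u k⟩

lemma ncard_filter_eq (P : (ZMod 39)ˣ → Prop) [DecidablePred P] :
    {x | P x}.ncard = (Finset.univ.filter P).card := by
  rw [← Set.ncard_coe_finset]
  congr 1
  ext x
  simp

lemma ncard_eq_ncard (P Q : (ZMod 39)ˣ → Prop) [DecidablePred P] [DecidablePred Q]
    (h : (Finset.univ.filter P).card = (Finset.univ.filter Q).card) :
    {x | P x}.ncard = {x | Q x}.ncard := by
  rw [ncard_filter_eq P, ncard_filter_eq Q]; exact h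

lemma ncard_ne_ncard (P Q : (ZMod 39)ˣ → Prop) [DecidablePred P] [DecidablePred Q]
    (h : (Finset.univ.filter P).card ≠ (Finset.univ.filter Q).card) :
    {x | P x}.ncard ≠ {x | Q x}.ncard := by
  rw [ncard_filter_eq P, ncard_filter_eq Q]; exact h

theorem balanced_d39 :
    IsBalanced 39 (Subgroup.zpowers (ZMod.unitOfCoprime 7 (by decide : Nat.Coprime 7 39))) ∧
    IsBalanced 39 (Subgroup.zpowers (ZMod.unitOfCoprime 29 (by decide : Nat.Coprime 29 39))) ∧
    Subgroup.zpowers (ZMod.unitOfCoprime 7 (by decide : Nat.Coprime 7 39)) ⊓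
        Subgroup.zpowers (ZMod.unitOfCoprime 29 (by decide : Nat.Coprime 29 39)) =
      Subgroup.zpowers (ZMod.unitOfCoprime 16 (by decide : Nat.Coprime 16 39)) ∧
    ¬ IsBalanced 39 (Subgroup.zpowers (ZMod.unitOfCoprime 16 (by decide : Nat.Coprime 16 39))) := by
  have h7 := mem_zpow_iff (ZMod.unitOfCoprime 7 (by decide : Nat.Coprime 7 39)) 12
    (by norm_num) (by decide)
  have h29 := mem_zpow_iff (ZMod.unitOfCoprime 29 (by decide : Nat.Coprime 29 39)) 6
    (by norm_num) (by decide)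
  have h16 := mem_zpow_iff (ZMod.unitOfCoprime 16 (by decide : Nat.Coprime 16 39)) 3
    (by norm_num) (by decide)
  refine ⟨?_, ?_, ?_, ?_⟩
  · intro g
    simp only [h7]
    refine ncard_eq_ncard _ _ ?_
    revert g
    decide
  · intro g
    simp only [h29]
    refine ncard_eq_ncard _ _ ?_
    revert g
    decide
  · ext x
    rw [Subgroup.mem_inf, h7 x, h29 x, h16 x]
    revert x
    decide
  · intro hbal
    have h := hbal 1
    simp only [h16] at h
    exact ncard_ne_ncard _ _ (by decide) h
end
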